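/- (Transience certificate, supercritical case) Suppose $0<\rho(1,\dots,1)\le+\infty$, so the system $B_1=\cdots=B_n=0$ has a root $\mathbf{q}=(q_1,\dots,q_n)\in(0,1)^n$. Let $\pi_{\mathbf{ij}}=q_{\mathbf{ij}}/(-q_{\mathbf{ii}})$ for $\mathbf{i}\ne\mathbf{0}$, $\mathbf{j}\ne\mathbf{i}$, be the jump chain probabilities, where $-q_{\mathbf{ii}}=-\sum_{k}i_k b^{(k)}_{\mathbf{e}_k}-a_{\mathbf{0}}$. Then $x_{\mathbf{i}}=1-\mathbf{q}^{\mathbf{i}}=1-q_1^{i_1}\cdots q_n^{i_n}$ is a non-constant bounded solution of the inequality $\sum_{\mathbf{j}} \pi_{\mathbf{ij}} x_{\mathbf{j}} \ge x_{\mathbf{i}}$ for all $\mathbf{i}\ne\mathbf{0}$; indeed $\sum_{\mathbf{j}}\pi_{\mathbf{ij}}x_{\mathbf{j}} = x_{\mathbf{i}} + \frac{-\mathbf{q}^{\mathbf{i}}A(\mathbf{q})}{-\sum_k i_k b^{(k)}_{\mathbf{e}_k}-a_{\mathbf{0}}} \ge x_{\mathbf{i}}$ since $A(\mathbf{q})\le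 0$. -/

import Mathlib

open Filter Topology Set MeasureTheory

noncomputable def gen {n : ℕ} (a : (Fin n → ℕ) → ℝ) (u : Fin n → ℝ) : ℝ :=
  ∑' j : Fin n → ℕ, a j * ∏ l, u l ^ j l

def unitvec {n : ℕ} (k : Fin n) : Fin n → ℕ := fun l => if l = k then 1 else 0

noncomputable def qmat {n : ℕ} (h a : (Fin n → ℕ) → ℝ) (b : Fin n → (Fin n → ℕ) → ℝ)
    (i j : Fin n → ℕ) : ℝ :=
  if i = 0 then h j
  else (∑ k : Fin n, if ∀ l, i l ≤ j l + unitvec k l then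
          (i k : ℝ) * b k (fun l => j l + unitvec k l - i l) else 0)
      + (if ∀ l, i l ≤ j l then a (fun l => j l - i l) else 0)

def IsTransFun {n : ℕ} (p : (Fin n → ℕ) → (Fin n → ℕ) → ℝ → ℝ) : Prop :=
  (∀ i j t, 0 ≤ t → 0 ≤ p i j t) ∧
  (∀ i t, 0 ≤ t → ∀ S : Finset (Fin n → ℕ), ∑ j ∈ S, p i j t ≤ 1) ∧
  (∀ i j, p i j 0 = if i = j then (1:ℝ) else 0)

def SatisfiesForward {n : ℕ} (Q : (Fin n → ℕ) → (Fin n → ℕ) → ℝ)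
    (p : (Fin n → ℕ) → (Fin n → ℕ) → ℝ → ℝ) : Prop :=
  ∀ i j t, 0 ≤ t → HasDerivAt (fun s => p i j s) (∑' k, p i k t * Q k j) t

def IsMinimalQFun {n : ℕ} (Q : (Fin n → ℕ) → (Fin n → ℕ) → ℝ)
    (p : (Fin n → ℕ) → (Fin n → ℕ) → ℝ → ℝ) : Prop :=
  IsTransFun p ∧ SatisfiesForward Q p ∧
  ∀ p', IsTransFun p' → SatisfiesForward Q p' → ∀ i j t, 0 ≤ t → p i j t ≤ p' i j t

private lemma shift_hasSum {n : ℕ} (i : Fin n → ℕ) {c : (Fin n → ℕ) → ℝ} {s : ℝ}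
    (hc : HasSum c s) :
    HasSum (fun j : Fin n → ℕ =>
      if ∀ l, i l ≤ j l then c (fun l => j l - i l) else 0) s := by
  have hinj : Function.Injective (fun m : Fin n → ℕ => (fun l => i l + m l : Fin n → ℕ)) := by
    intro m m' h
    funext l
    have := congrFun h l
    simp only [] at this
    omega
  have h0 : ∀ j ∉ Set.range (fun m : Fin n → ℕ => (fun l => i l + m l : Fin n → ℕ)),
      (if ∀ l, i l ≤ j l then c (fun l => j l - i l) else 0) = 0 := by
    intro j hj
    rw [if_neg]
    intro hcond
    exact hj ⟨fun l => j l - i l, funext fun l => by have := hcond l; simp; omega⟩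
  refine (hinj.hasSum_iff h0).mp ?_
  convert hc using 1
  funext m
  simp only [Function.comp]
  rw [if_pos (fun l => Nat.le_add_right _ _)]
  congr 1
  funext l
  omega

private lemma has_zero_sum {n : ℕ} {f : (Fin n → ℕ) → ℝ} {i₀ : Fin n → ℕ}
    (hval : HasSum (fun j : {j : Fin n → ℕ // j ≠ i₀} => f j.1) (-f i₀)) :
    HasSum f 0 := by
  have h1 : HasSum (fun j : Fin n → ℕ => if j = i₀ then 0 else f j) (-f i₀) := by
    have := (hasSum_subtype_iff_indicator (s := {j : Fin n → ℕ | j ≠ i₀})).mp hval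
    convert this using 1
    funext j
    by_cases h : j = i₀ <;> simp [Set.indicator_apply, h]
  have h2 : HasSum (fun j : Fin n → ℕ => if j = i₀ then f i₀ else 0) (f i₀) :=
    hasSum_ite_eq i₀ (f i₀)
  have h3 := h2.add h1
  simp only [add_neg_cancel] at h3
  convert h3 using 1
  funext j
  by_cases h : j = i₀ <;> simp [h]

/-- transience certificate, supercritical case: if
`B_1 = ⋯ = B_n = 0` has a root `q ∈ (0,1)^n`, then
`x_i = 1 - q^i` is a non-constant bounded solution of
`∑_j π_{ij} x_j ≥ x_i` (`i ≠ 0`) for the jump chain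
`π_{ij} = q_{ij}/(-q_{ii})`; indeed the sum equals
`x_i + (-q^i A(q))/(-∑_k i_k b^{(k)}_{e_k} - a_0) ≥ x_i`. -/
theorem stmt_9 {n : ℕ} (hn : 0 < n) (a : (Fin n → ℕ) → ℝ)
    (b : Fin n → (Fin n → ℕ) → ℝ)
    (hann : ∀ j : Fin n → ℕ, j ≠ 0 → 0 ≤ a j)
    (hasum : Summable a)
    (haval : HasSum (fun j : {j : Fin n → ℕ // j ≠ 0} => a j.1) (-a 0))
    (hapos : 0 < -a 0)
    (hbnn : ∀ i j, j ≠ unitvec i → 0 ≤ b i j)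
    (hbsum : ∀ i, Summable (b i))
    (hbval : ∀ i, HasSum (fun j : {j : Fin n → ℕ // j ≠ unitvec i} => b i j.1)
      (-(b i (unitvec i))))
    (hbpos : ∀ i, 0 < -(b i (unitvec i)))
    -- supercritical root `q ∈ (0,1)^n`
    (q : Fin n → ℝ) (hq : ∀ l, q l ∈ Ioo (0:ℝ) 1)
    (hqroot : ∀ k, gen (b k) q = 0)
    -- total jump rates `D_i = -∑_k i_k b^{(k)}_{e_k} - a_0` and jump chain `π`
    (D : (Fin n → ℕ) → ℝ)
    (hD : ∀ i : Fin n → ℕ, D i = -(∑ k, (i k : ℝ) * b k (unitvec k)) - a 0)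
    (π : (Fin n → ℕ) → (Fin n → ℕ) → ℝ)
    (hπ : ∀ i j : Fin n → ℕ, i ≠ 0 → j ≠ i → π i j = qmat a a b i j / D i)
    (hπd : ∀ i : Fin n → ℕ, i ≠ 0 → π i i = 0)
    (x : (Fin n → ℕ) → ℝ)
    (hx : ∀ i : Fin n → ℕ, x i = 1 - ∏ l, q l ^ i l) :
    (∀ i, x i ∈ Icc (0:ℝ) 1) ∧ (∃ i j, x i ≠ x j) ∧
    ∀ i : Fin n → ℕ, i ≠ 0 →
      HasSum (fun j : Fin n → ℕ => π i j * x j)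
        (x i + (-(∏ l, q l ^ i l) * gen a q) / D i) ∧
      x i ≤ x i + (-(∏ l, q l ^ i l) * gen a q) / D i := by
  set Q0 : (Fin n → ℕ) → ℝ := fun i => ∏ l, q l ^ i l with hQ0
  have hQpos : ∀ i, 0 < Q0 i := fun i =>
    Finset.prod_pos fun l _ => pow_pos (hq l).1 _
  have hQle1 : ∀ i, Q0 i ≤ 1 := fun i =>
    Finset.prod_le_one (fun l _ => (pow_pos (hq l).1 _).le)
      (fun l _ => pow_le_one₀ (hq l).1.le (hq l).2.le)
  have hQadd : ∀ i m : Fin n → ℕ, Q0 (fun l => i l + m l) = Q0 i * Q0 m := by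
    intro i m
    simp only [hQ0]
    rw [← Finset.prod_mul_distrib]
    exact Finset.prod_congr rfl fun l _ => pow_add _ _ _
  -- positivity of D
  have hDpos : ∀ i : Fin n → ℕ, 0 < D i := by
    intro i
    rw [hD]
    have h1 : ∑ k, (i k : ℝ) * b k (unitvec k) ≤ 0 :=
      Finset.sum_nonpos fun k _ =>
        mul_nonpos_of_nonneg_of_nonpos (Nat.cast_nonneg _) (by linarith [hbpos k])
    linarith
  -- summability with weights
  have hsummul : ∀ c : (Fin n → ℕ) → ℝ, Summable c → Summable (fun j => c j * Q0 j) := by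
    intro c hc
    refine Summable.of_norm_bounded hc.abs fun j => ?_
    rw [Real.norm_eq_abs, abs_mul]
    exact mul_le_of_le_one_right (abs_nonneg _)
      (abs_le_one_iff_mul_self_le_one.mpr (by nlinarith [hQpos j, hQle1 j]))
  have hA : HasSum (fun j => a j * Q0 j) (gen a q) := (hsummul a hasum).hasSum
  have hBk : ∀ k, HasSum (fun j => b k j * Q0 j) 0 := by
    intro k
    have := (hsummul (b k) (hbsum k)).hasSum
    rwa [show (∑' j, b k j * Q0 j) = gen (b k) q from rfl, hqroot k] at this
  have hA0 : HasSum a 0 := has_zero_sum haval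
  have hBk0 : ∀ k, HasSum (b k) 0 := fun k => has_zero_sum (hbval k)
  -- key pointwise rewriting for the branching terms
  have key : ∀ (k : Fin n) (i : Fin n → ℕ), i k ≠ 0 → ∀ (c : (Fin n → ℕ) → ℝ) (j : Fin n → ℕ),
      (if ∀ l, i l ≤ j l + unitvec k l then (i k : ℝ) * c (fun l => j l + unitvec k l - i l) else 0)
      = (i k : ℝ) * (if ∀ l, (i l - unitvec k l) ≤ j l then c (fun l => j l - (i l - unitvec k l)) else 0) := by
    intro k i hik c j
    have hcond : (∀ l, i l ≤ j l + unitvec k l) ↔ (∀ l, (i l - unitvec k l) ≤ j l) := by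
      constructor <;> intro h l <;> have h1 := h l <;> unfold unitvec at * <;>
        split_ifs at * <;> omega
    by_cases h : ∀ l, i l ≤ j l + unitvec k l
    · rw [if_pos h, if_pos (hcond.mp h)]
      congr 2
      funext l
      have h1 := h l
      by_cases hlk : l = k
      · subst hlk
        simp [unitvec] at h1 ⊢
        all_goals omega
      · simp [unitvec, hlk] at h1 ⊢
        all_goals omega
    · rw [if_neg h, if_neg (fun hc => h (hcond.mpr hc)), mul_zero]
  -- L1: row sums of qmat are zero
  have L1 : ∀ i : Fin n → ℕ, i ≠ 0 → HasSum (fun j => qmat a a b i j) 0 := by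
    intro i hi
    have hS : HasSum (fun j : Fin n → ℕ =>
        if ∀ l, i l ≤ j l then a (fun l => j l - i l) else 0) 0 := shift_hasSum i hA0
    have hT : ∀ k : Fin n, HasSum (fun j : Fin n → ℕ =>
        if ∀ l, i l ≤ j l + unitvec k l then
          (i k : ℝ) * b k (fun l => j l + unitvec k l - i l) else 0) 0 := by
      intro k
      by_cases hik : i k = 0
      · convert hasSum_zero with j
        split_ifs with h
        · simp [hik]
        · rfl
      · have h2 := (shift_hasSum (fun l => i l - unitvec k l) (hBk0 k)).mul_left (i k : ℝ)
        rw [mul_zero] at h2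
        simpa only [key k i hik (b k)] using h2
    have hsum := (hasSum_sum (fun k (_ : k ∈ Finset.univ) => hT k)).add hS
    simp only [Finset.sum_const_zero, add_zero] at hsum
    convert hsum using 2 with j
    rw [qmat, if_neg hi]
  -- L2: weighted row sums
  have L2 : ∀ i : Fin n → ℕ, i ≠ 0 →
      HasSum (fun j => qmat a a b i j * Q0 j) (Q0 i * gen a q) := by
    intro i hi
    -- the immigration part
    have hS : HasSum (fun j : Fin n → ℕ =>
        (if ∀ l, i l ≤ j l then a (fun l => j l - i l) else 0) * Q0 j)
        (Q0 i * gen a q) := by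
      have h1 := shift_hasSum i (hA.mul_left (Q0 i))
      convert h1 using 2 with j
      by_cases h : ∀ l, i l ≤ j l
      · rw [if_pos h, if_pos h]
        have hj : (fun l => i l + (j l - i l)) = j := funext fun l => by have := h l; omega
        have : Q0 j = Q0 i * Q0 (fun l => j l - i l) := by rw [← hQadd, hj]
        rw [this]; ring
      · rw [if_neg h, if_neg h, zero_mul]
    -- the branching parts vanish since B_k(q) = 0
    have hT : ∀ k : Fin n, HasSum (fun j : Fin n → ℕ =>
        (if ∀ l, i l ≤ j l + unitvec k l then
          (i k : ℝ) * b k (fun l => j l + unitvec k l - i l) else 0) * Q0 j) 0 := by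
      intro k
      by_cases hik : i k = 0
      · convert hasSum_zero with j
        split_ifs with h
        · simp [hik]
        · simp
      · set i' : Fin n → ℕ := fun l => i l - unitvec k l with hi'
        have h2 := shift_hasSum i' (((hBk k).mul_left (Q0 i')).mul_left (i k : ℝ))
        rw [mul_zero, mul_zero] at h2
        convert h2 using 2 with j
        rw [key k i hik (b k) j]
        by_cases h : ∀ l, i' l ≤ j l
        · rw [if_pos h, if_pos h]
          have hj : (fun l => i' l + (j l - i' l)) = j := funext fun l => by have := h l; omega
          have : Q0 j = Q0 i' * Q0 (fun l => j l - i' l) := by rw [← hQadd, hj]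
          rw [this]; ring
        · rw [if_neg h, if_neg h]; simp
    have hsum := (hasSum_sum (fun k (_ : k ∈ Finset.univ) => hT k)).add hS
    simp only [Finset.sum_const_zero, zero_add] at hsum
    convert hsum using 2 with j
    rw [qmat, if_neg hi, add_mul, Finset.sum_mul]
  have hPQ : ∀ i : Fin n → ℕ, (∏ l, q l ^ i l) = Q0 i := fun _ => rfl
  -- diagonal entry
  have qmat_ii : ∀ i : Fin n → ℕ, i ≠ 0 → qmat a a b i i = -(D i) := by
    intro i hi
    rw [qmat, if_neg hi, hD]
    have h1 : ∀ k : Fin n, (if ∀ l, i l ≤ i l + unitvec k l then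
        (i k : ℝ) * b k (fun l => i l + unitvec k l - i l) else 0)
        = (i k : ℝ) * b k (unitvec k) := by
      intro k
      rw [if_pos (fun l => Nat.le_add_right _ _)]
      congr 2
      funext l
      omega
    have h2 : (if ∀ l, i l ≤ i l then a (fun l => i l - i l) else 0) = a 0 := by
      rw [if_pos (fun l => le_refl _)]
      congr 1
      funext l
      simp
    simp only [h1, h2]
    ring
  -- A(q) ≤ 0
  have hAneg : gen a q ≤ 0 := by
    have h1 := hA.sub (hasSum_ite_eq (0 : Fin n → ℕ) (a 0 * Q0 0))
    have h2 := hA0.sub (hasSum_ite_eq (0 : Fin n → ℕ) (a 0))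
    have hle := hasSum_le (fun j => ?_) h1 h2
    · have hQ00 : Q0 0 = 1 := by simp [hQ0]
      rw [hQ00] at hle
      linarith
    · by_cases hj : j = 0
      · subst hj; simp
      · simp only [if_neg hj, sub_zero]
        exact mul_le_of_le_one_right (hann j hj) (hQle1 j)
  refine ⟨?_, ?_, ?_⟩
  · intro i
    rw [hx i]
    have h1 : (∏ l, q l ^ i l) ≤ 1 := hQle1 i
    have h2 : (0:ℝ) < ∏ l, q l ^ i l := hQpos i
    constructor <;> simp <;> linarith
  · refine ⟨unitvec ⟨0, hn⟩, 0, ?_⟩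
    rw [hx, hx]
    have h0 : (∏ l, q l ^ (0 : Fin n → ℕ) l) = 1 := by simp
    have h1 : (∏ l, q l ^ (unitvec ⟨0, hn⟩) l) = q ⟨0, hn⟩ := by
      simp [unitvec, pow_ite]
    rw [h0, h1]
    have := (hq ⟨0, hn⟩).2
    intro hc
    rw [sub_eq_sub_iff_sub_eq_sub] at hc
    simp at hc
    linarith
  · intro i hi
    have hDne : D i ≠ 0 := (hDpos i).ne'
    have LG : HasSum (fun j => qmat a a b i j * (1 - Q0 j)) (0 - Q0 i * gen a q) := by
      have h := (L1 i hi).sub (L2 i hi)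
      simpa only [mul_one_sub] using h
    have LH : HasSum (fun j : Fin n → ℕ =>
        if j = i then qmat a a b i i * (1 - Q0 i) else 0) (qmat a a b i i * (1 - Q0 i)) :=
      hasSum_ite_eq i _
    have LF := (LG.sub LH).div_const (D i)
    have hval : (0 - Q0 i * gen a q - qmat a a b i i * (1 - Q0 i)) / D i
        = x i + (-(Q0 i) * gen a q) / D i := by
      rw [qmat_ii i hi, hx i, hPQ i]
      field_simp
      ring
    rw [hval] at LF
    have hfun : (fun j : Fin n → ℕ => π i j * x j) = fun j =>
        (qmat a a b i j * (1 - Q0 j)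
          - (if j = i then qmat a a b i i * (1 - Q0 i) else 0)) / D i := by
      funext j
      by_cases hji : j = i
      · subst hji
        simp [hπd j hi]
      · rw [if_neg hji, hπ i j hi hji, hx j, hPQ j, sub_zero]
        ring
    constructor
    · rw [hfun]
      exact LF
    · rw [hPQ i]
      have h : (0:ℝ) ≤ (-(Q0 i)) * gen a q / D i :=
        div_nonneg (by nlinarith [hQpos i]) (hDpos i).le
      linarith
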